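/- Let A be an m × n totally unimodular matrix with rational entries. Then for every collection of columns of A (i.e., for every subset S of the column indices), the columns in S can be split into two disjoint parts S₁ and S₂ with S₁ ∪ S₂ = S such that the vector obtained as (sum of the columns in S₁) minus (sum of the columns in S₂) has all entries in {-1, 0, 1}. -/

import Mathlib

open Matrix

lemma fromRows_neg_self_TU {m n : ℕ} {A : Matrix (Fin m) (Fin n) ℚ}
    (hA : A.IsTotallyUnimodular) : (fromRows A (-A)).IsTotallyUnimodular := by
  rw [isTotallyUnimodular_iff]
  intro k f g
  have key : (fromRows A (-A)).submatrix f g =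
      Matrix.of (fun p q => (fun p => Sum.elim (fun _ => (1:ℚ)) (fun _ => -1) (f p)) p *
        (A.submatrix (fun p => Sum.elim id id (f p)) g) p q) := by
    ext p q
    cases hf : f p <;> simp [hf, fromRows_apply_inl, fromRows_apply_inr]
  rw [key, det_mul_column]
  change _ ∈ MonoidHom.mrange SignType.castHom.toMonoidHom
  refine mul_mem (prod_mem fun p _ => ?_) ?_
  · cases f p <;> simp
    · exact ⟨-1, by simp⟩
  · exact (isTotallyUnimodular_iff A).mp hA k _ g

lemma caseA {k : ℕ} {I : Type} [Fintype I]
    (M : Matrix I (Fin k) ℚ) (hM : M.IsTotallyUnimodular)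
    (hunit : ∀ j : Fin k, ∃ i, M i = Pi.single j 1)
    (c : I → ℤ) (x : Fin k → ℚ)
    (hspan : Submodule.span ℚ (M '' {i | M i ⬝ᵥ x = (c i : ℚ)}) = ⊤) :
    ∃ z : Fin k → ℤ, ∀ j, (z j : ℚ) = x j := by
  classical
  obtain ⟨t, hts, htspan, htli⟩ :=
    exists_linearIndependent ℚ (M '' {i | M i ⬝ᵥ x = (c i : ℚ)})
  have hsp : Submodule.span ℚ t = ⊤ := htspan.trans hspan
  let b : Module.Basis t ℚ (Fin k → ℚ) := Module.Basis.mk htli (by rw [Subtype.range_coe]; rw [hsp])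
  haveI : Fintype t := FiniteDimensional.fintypeBasisIndex b
  have hcard : Fintype.card t = k := by
    have h1 := Module.finrank_eq_card_basis b
    rw [Module.finrank_fin_fun] at h1
    omega
  let e : Fin k ≃ t := (Fintype.equivFinOfCardEq hcard).symm
  have hmem : ∀ v : t, (v : Fin k → ℚ) ∈ M '' {i | M i ⬝ᵥ x = (c i : ℚ)} := fun v => hts v.2
  choose r hrT hrM using fun v : t => hmem v
  set f : Fin k → I := fun p => r (e p) with hf
  set M' : Matrix (Fin k) (Fin k) ℚ := M.submatrix f id with hM'
  have hM'row : ∀ p, M' p = ((e p : Fin k → ℚ)) := by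
    intro p
    ext q
    exact congrFun (hrM (e p)) q
  -- rows linearly independent
  have hli : LinearIndependent ℚ (fun p => M' p) := by
    have h2 : LinearIndependent ℚ (fun p : Fin k => ((e p : Fin k → ℚ))) :=
      htli.comp e e.injective
    simpa [funext hM'row] using h2
  have hdet0 : M'.det ≠ 0 := by
    intro h0
    obtain ⟨v, hv0, hv⟩ := Matrix.exists_vecMul_eq_zero_iff.mpr h0
    rw [Fintype.linearIndependent_iff] at hli
    apply hv0
    funext p
    apply hli v _ p
    funext q
    have := congrFun hv q
    simpa [Matrix.vecMul, dotProduct] using this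
  have hdetTU : M'.det ∈ Set.range (SignType.cast : SignType → ℚ) :=
    (isTotallyUnimodular_iff M).mp hM k f id
  have hdet : M'.det = 1 ∨ M'.det = -1 := by
    obtain ⟨s, hs⟩ := hdetTU
    cases s with
    | zero => exact absurd hs.symm hdet0
    | pos => left; exact hs.symm
    | neg => right; exact hs.symm
  have hMx : M' *ᵥ x = fun p => (c (f p) : ℚ) := by
    funext p
    show M' p ⬝ᵥ x = _
    rw [hM'row]
    rw [← hrM (e p)]
    exact hrT (e p)
  have key : M'.det • x = M'.adjugate *ᵥ (fun p => (c (f p) : ℚ)) := by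
    rw [← hMx, Matrix.mulVec_mulVec, Matrix.adjugate_mul, Matrix.smul_mulVec,
      Matrix.one_mulVec]
  -- adjugate entries are integers
  have hadj : ∀ p q, ∃ w : ℤ, (w : ℚ) = M'.adjugate p q := by
    intro p q
    rw [Matrix.adjugate_apply]
    obtain ⟨ip, hip⟩ := hunit p
    have hupd : M'.updateRow q (Pi.single p 1) = M.submatrix (Function.update f q ip) id := by
      ext p' q'
      rcases eq_or_ne p' q with rfl | h
      · simp [hip]
      · simp [Matrix.updateRow_ne h, Function.update_of_ne h, hM']
    rw [hupd]
    obtain ⟨s, hs⟩ := (isTotallyUnimodular_iff M).mp hM k _ id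
    exact ⟨(s : ℤ), by rw [← hs]; cases s <;> simp⟩
  choose adjZ hadjZ using hadj
  have hint : ∀ j, ∃ zj : ℤ, (zj : ℚ) = x j := by
    intro j
    have hkey := congrFun key j
    have hw : (M'.adjugate *ᵥ (fun p => (c (f p) : ℚ))) j
        = ((∑ q, adjZ j q * c (f q) : ℤ) : ℚ) := by
      show ∑ q, M'.adjugate j q * (c (f q) : ℚ) = _
      push_cast
      exact Finset.sum_congr rfl fun q _ => by rw [hadjZ]
    rw [hw] at hkey
    have hsmul : (M'.det • x) j = M'.det * x j := rfl
    rcases hdet with h | h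
    · exact ⟨_, by rw [← hkey, hsmul, h, one_mul]⟩
    · refine ⟨-(∑ q, adjZ j q * c (f q)), ?_⟩
      have h2 : (-1 : ℚ) * x j = ((∑ q, adjZ j q * c (f q) : ℤ) : ℚ) := by
        rw [← h, ← hsmul, hkey]
      push_cast at h2 ⊢
      linarith
  choose z hz using hint
  exact ⟨z, hz⟩

lemma exists_int_point {k : ℕ} {I : Type} [Fintype I]
    (M : Matrix I (Fin k) ℚ) (hM : M.IsTotallyUnimodular)
    (hunit : ∀ j : Fin k, ∃ i, M i = Pi.single j 1)
    (hunit' : ∀ j : Fin k, ∃ i, M i = -Pi.single j 1)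
    (c : I → ℤ) (x : Fin k → ℚ) (hx : ∀ i, M i ⬝ᵥ x ≤ (c i : ℚ)) :
    ∃ z : Fin k → ℤ, ∀ i, M i ⬝ᵥ (fun j => ((z j : ℚ))) ≤ (c i : ℚ) := by
  classical
  suffices h : ∀ N : ℕ, ∀ x : Fin k → ℚ, (∀ i, M i ⬝ᵥ x ≤ (c i : ℚ)) →
      (Finset.univ.filter (fun i => M i ⬝ᵥ x ≠ (c i : ℚ))).card ≤ N →
      ∃ z : Fin k → ℤ, ∀ i, M i ⬝ᵥ (fun j => ((z j : ℚ))) ≤ (c i : ℚ) by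
    exact h _ x hx le_rfl
  intro N
  induction N with
  | zero =>
    intro x hx hcard
    -- all constraints tight, in particular unit rows, hence span is ⊤
    have htight : ∀ i, M i ⬝ᵥ x = (c i : ℚ) := by
      intro i
      by_contra hne
      have : i ∈ Finset.univ.filter (fun i => M i ⬝ᵥ x ≠ (c i : ℚ)) := by
        simp [hne]
      have hemp : Finset.univ.filter (fun i => M i ⬝ᵥ x ≠ (c i : ℚ)) = ∅ :=
        Finset.card_eq_zero.mp (Nat.le_zero.mp hcard)
      rw [hemp] at this
      simp at this
    have hspan : Submodule.span ℚ (M '' {i | M i ⬝ᵥ x = (c i : ℚ)}) = ⊤ := by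
      rw [eq_top_iff]
      rw [← (Pi.basisFun ℚ (Fin k)).span_eq]
      apply Submodule.span_le.mpr
      rintro v ⟨j, rfl⟩
      apply Submodule.subset_span
      obtain ⟨i, hi⟩ := hunit j
      exact ⟨i, htight i, by rw [hi]; simp [Pi.basisFun_apply]⟩
    obtain ⟨z, hz⟩ := caseA M hM hunit c x hspan
    exact ⟨z, fun i => by rw [show (fun j => ((z j : ℚ))) = x from funext hz]; exact hx i⟩
  | succ N ih =>
    intro x hx hcard
    by_cases hspan : Submodule.span ℚ (M '' {i | M i ⬝ᵥ x = (c i : ℚ)}) = ⊤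
    · obtain ⟨z, hz⟩ := caseA M hM hunit c x hspan
      exact ⟨z, fun i => by rw [show (fun j => ((z j : ℚ))) = x from funext hz]; exact hx i⟩
    · -- find a direction y orthogonal to all tight rows
      obtain ⟨g, hg0, hgbot⟩ := Submodule.exists_dual_map_eq_bot_of_lt_top
        (lt_top_iff_ne_top.mpr hspan) inferInstance
      set y : Fin k → ℚ := fun j => g (Pi.single j 1) with hy
      have hgy : ∀ v : Fin k → ℚ, g v = v ⬝ᵥ y := by
        intro v
        have hv : v = ∑ j, v j • (Pi.single j 1 : Fin k → ℚ) := by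
          funext q
          rw [Finset.sum_apply]
          simp [Pi.single_apply]
        conv_lhs => rw [hv]
        rw [map_sum]
        simp only [_root_.map_smul]
        simp only [dotProduct, smul_eq_mul, hy]
      have hyne : y ≠ 0 := by
        intro h0
        apply hg0
        apply LinearMap.ext
        intro v
        rw [hgy, h0, dotProduct_zero]
        rfl
      have horth : ∀ i, M i ⬝ᵥ x = (c i : ℚ) → M i ⬝ᵥ y = 0 := by
        intro i hi
        rw [← hgy]
        have : g (M i) ∈ Submodule.map g (Submodule.span ℚ (M '' {i | M i ⬝ᵥ x = (c i : ℚ)})) :=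
          ⟨M i, Submodule.subset_span ⟨i, hi, rfl⟩, rfl⟩
        rw [hgbot] at this
        exact (Submodule.mem_bot ℚ).mp this
      -- positive-direction rows exist
      have hPos : (Finset.univ.filter (fun i => 0 < M i ⬝ᵥ y)).Nonempty := by
        obtain ⟨j, hj⟩ : ∃ j, y j ≠ 0 := by
          by_contra hno
          push_neg at hno
          exact hyne (funext hno)
        rcases lt_or_gt_of_ne hj with h | h
        · obtain ⟨i, hi⟩ := hunit' j
          exact ⟨i, by simp [hi, neg_dotProduct, single_dotProduct, h]⟩
        · obtain ⟨i, hi⟩ := hunit j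
          exact ⟨i, by simp [hi, single_dotProduct, h]⟩
      obtain ⟨i0, hi0mem, hi0min⟩ := Finset.exists_min_image _
        (fun i => ((c i : ℚ) - M i ⬝ᵥ x) / (M i ⬝ᵥ y)) hPos
      rw [Finset.mem_filter] at hi0mem
      have hi0pos : 0 < M i0 ⬝ᵥ y := hi0mem.2
      set t : ℚ := ((c i0 : ℚ) - M i0 ⬝ᵥ x) / (M i0 ⬝ᵥ y) with ht
      have ht0 : 0 ≤ t := div_nonneg (by linarith [hx i0]) hi0pos.le
      set x' : Fin k → ℚ := x + t • y with hx'
      have hdot : ∀ i, M i ⬝ᵥ x' = M i ⬝ᵥ x + t * (M i ⬝ᵥ y) := by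
        intro i
        rw [hx', dotProduct_add, dotProduct_smul]
        simp
      have hfeas : ∀ i, M i ⬝ᵥ x' ≤ (c i : ℚ) := by
        intro i
        rw [hdot]
        rcases le_or_gt (M i ⬝ᵥ y) 0 with h | h
        · nlinarith [hx i]
        · have hle := hi0min i (Finset.mem_filter.mpr ⟨Finset.mem_univ i, h⟩)
          have h2 : t * (M i ⬝ᵥ y) ≤ (c i : ℚ) - M i ⬝ᵥ x := (le_div_iff₀ h).mp hle
          linarith
      have htight' : ∀ i, M i ⬝ᵥ x = (c i : ℚ) → M i ⬝ᵥ x' = (c i : ℚ) := by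
        intro i hi
        rw [hdot, horth i hi, mul_zero, add_zero, hi]
      have hi0tight : M i0 ⬝ᵥ x' = (c i0 : ℚ) := by
        have hcan : t * (M i0 ⬝ᵥ y) = (c i0 : ℚ) - M i0 ⬝ᵥ x :=
          div_mul_cancel₀ _ hi0pos.ne'
        rw [hdot, hcan]
        ring
      have hi0old : M i0 ⬝ᵥ x ≠ (c i0 : ℚ) := by
        intro h
        exact absurd (horth i0 h) hi0pos.ne'
      have hsub : (Finset.univ.filter (fun i => M i ⬝ᵥ x' ≠ (c i : ℚ))).card ≤ N := by
        have hss : Finset.univ.filter (fun i => M i ⬝ᵥ x' ≠ (c i : ℚ)) ⊆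
            (Finset.univ.filter (fun i => M i ⬝ᵥ x ≠ (c i : ℚ))).erase i0 := by
          intro i hi
          rw [Finset.mem_filter] at hi
          rw [Finset.mem_erase, Finset.mem_filter]
          refine ⟨fun h => hi.2 (h ▸ hi0tight), Finset.mem_univ i, fun h => hi.2 (htight' i h)⟩
        have h1 := Finset.card_le_card hss
        rw [Finset.card_erase_of_mem (Finset.mem_filter.mpr ⟨Finset.mem_univ i0, hi0old⟩)] at h1
        omega
      exact ih x' hfeas hsub

/-- Ghouila-Houri characterization, direction (i) ⇒ (iii): if `A` is totally unimodular, then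
every collection of columns of `A` can be split into two parts such that the sum of the columns
in one part minus the sum of the columns in the other part is a vector with entries in
`{-1, 0, 1}`. -/
theorem isTotallyUnimodular_imp_ghouilaHouri_split {m n : ℕ} (A : Matrix (Fin m) (Fin n) ℚ)
    (hA : A.IsTotallyUnimodular) :
    ∀ S : Finset (Fin n), ∃ S₁ S₂ : Finset (Fin n),
      Disjoint S₁ S₂ ∧ S₁ ∪ S₂ = S ∧
      ∀ i : Fin m, (∑ j ∈ S₁, A i j) - (∑ j ∈ S₂, A i j) ∈ ({-1, 0, 1} : Set ℚ) := by
  intro S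
  classical
  have hent : ∀ i j, ∃ w : ℤ, (w : ℚ) = A i j := by
    intro i j
    obtain ⟨s, hs⟩ := hA.apply i j
    exact ⟨(s : ℤ), by rw [← hs]; cases s <;> simp⟩
  choose B hB using hent
  set bz : Fin m → ℤ := fun i => ∑ j ∈ S, B i j with hbz
  have hbzc : ∀ i, ((bz i : ℚ)) = ∑ j ∈ S, A i j := by
    intro i
    push_cast [hbz]
    exact Finset.sum_congr rfl fun j _ => hB i j
  set M : Matrix ((Fin m ⊕ Fin m) ⊕ (Fin n ⊕ Fin n)) (Fin n) ℚ :=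
    Matrix.fromRows (Matrix.fromRows A (-A)) (Matrix.fromRows 1 (-1)) with hMdef
  have hrow3 : ∀ j, M (Sum.inr (Sum.inl j)) = Pi.single j 1 := by
    intro j
    ext q
    rcases eq_or_ne q j with rfl | h
    · simp [hMdef, Matrix.one_apply]
    · simp [hMdef, Matrix.one_apply_ne (Ne.symm h), Pi.single_eq_of_ne h]
  have hrow4 : ∀ j, M (Sum.inr (Sum.inr j)) = -Pi.single j 1 := by
    intro j
    ext q
    rcases eq_or_ne q j with rfl | h
    · simp [hMdef, Matrix.one_apply]
    · simp [hMdef, Matrix.one_apply_ne (Ne.symm h), Pi.single_eq_of_ne h]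
  have hMTU : M.IsTotallyUnimodular := by
    apply (fromRows_neg_self_TU hA).fromRows_unitlike
    rintro _ (j | j)
    · refine ⟨j, 1, ?_⟩
      ext q
      rcases eq_or_ne q j with rfl | h
      · simp [Matrix.one_apply]
      · simp [Matrix.one_apply_ne (Ne.symm h), Pi.single_eq_of_ne h]
    · refine ⟨j, -1, ?_⟩
      ext q
      rcases eq_or_ne q j with rfl | h
      · simp [Matrix.one_apply]
      · simp [Matrix.one_apply_ne (Ne.symm h), Pi.single_eq_of_ne h]
  have hunit : ∀ j : Fin n, ∃ i, M i = Pi.single j 1 := fun j => ⟨_, hrow3 j⟩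
  have hunit' : ∀ j : Fin n, ∃ i, M i = -Pi.single j 1 := fun j => ⟨_, hrow4 j⟩
  set c : ((Fin m ⊕ Fin m) ⊕ (Fin n ⊕ Fin n)) → ℤ :=
    Sum.elim (Sum.elim (fun i => ⌈(bz i : ℚ)/2⌉) (fun i => -⌊(bz i : ℚ)/2⌋))
      (Sum.elim (fun j => if j ∈ S then 1 else 0) (fun _ => 0)) with hc
  set x0 : Fin n → ℚ := fun j => if j ∈ S then (1:ℚ)/2 else 0 with hx0def
  have hdotx0 : ∀ v : Fin n → ℚ, v ⬝ᵥ x0 = (∑ j ∈ S, v j)/2 := by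
    intro v
    show (∑ j, v j * x0 j) = _
    rw [Finset.sum_div]
    calc (∑ j, v j * x0 j) = ∑ j, if j ∈ S then v j / 2 else 0 :=
          Finset.sum_congr rfl fun j _ => by
            by_cases h : j ∈ S <;> simp [hx0def, h] <;> ring
      _ = _ := by rw [Finset.sum_ite_mem, Finset.univ_inter]
  have hrow1 : ∀ i, M (Sum.inl (Sum.inl i)) = A i := fun i => rfl
  have hrow2 : ∀ i, M (Sum.inl (Sum.inr i)) = -(A i) := fun i => rfl
  have hx0feas : ∀ i, M i ⬝ᵥ x0 ≤ (c i : ℚ) := by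
    rintro ((i | i) | (j | j))
    · rw [hrow1, hdotx0, ← hbzc]
      exact Int.le_ceil _
    · rw [hrow2, neg_dotProduct, hdotx0, ← hbzc]
      have hcv : ((c (Sum.inl (Sum.inr i)) : ℤ) : ℚ) = -((⌊(bz i : ℚ)/2⌋ : ℤ) : ℚ) := by
        simp [hc]
      rw [hcv]
      have := Int.floor_le ((bz i : ℚ)/2)
      linarith
    · rw [hrow3, single_dotProduct, one_mul]
      show x0 j ≤ ((if j ∈ S then (1:ℤ) else 0 : ℤ) : ℚ)
      by_cases h : j ∈ S <;> simp [hx0def, h] <;> norm_num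
    · rw [hrow4, neg_dotProduct, single_dotProduct, one_mul]
      show -x0 j ≤ ((0:ℤ) : ℚ)
      by_cases h : j ∈ S <;> simp [hx0def, h] <;> norm_num
  obtain ⟨z, hz⟩ := exists_int_point M hMTU hunit hunit' c x0 hx0feas
  -- extract bounds on z
  have hzub : ∀ j, z j ≤ if j ∈ S then 1 else 0 := by
    intro j
    have h := hz (Sum.inr (Sum.inl j))
    rw [hrow3, single_dotProduct, one_mul] at h
    have h2 : ((z j : ℚ)) ≤ ((if j ∈ S then (1:ℤ) else 0 : ℤ) : ℚ) := h
    exact_mod_cast h2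
  have hzlb : ∀ j, 0 ≤ z j := by
    intro j
    have h := hz (Sum.inr (Sum.inr j))
    rw [hrow4, neg_dotProduct, single_dotProduct, one_mul] at h
    have h2 : (-(z j : ℚ)) ≤ ((0:ℤ) : ℚ) := h
    have h3 : -(z j) ≤ 0 := by exact_mod_cast h2
    omega
  have hceil : ∀ i, A i ⬝ᵥ (fun j => ((z j : ℚ))) ≤ ((⌈(bz i : ℚ)/2⌉ : ℤ) : ℚ) := by
    intro i
    have h := hz (Sum.inl (Sum.inl i))
    rw [hrow1] at h
    exact h
  have hfloor : ∀ i, ((⌊(bz i : ℚ)/2⌋ : ℤ) : ℚ) ≤ A i ⬝ᵥ (fun j => ((z j : ℚ))) := by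
    intro i
    have h := hz (Sum.inl (Sum.inr i))
    rw [hrow2, neg_dotProduct] at h
    have hcv : ((c (Sum.inl (Sum.inr i)) : ℤ) : ℚ) = -((⌊(bz i : ℚ)/2⌋ : ℤ) : ℚ) := by
      simp [hc]
    rw [hcv] at h
    linarith
  have hz01 : ∀ j ∈ S, z j = 0 ∨ z j = 1 := by
    intro j hj
    have h1 := hzub j
    rw [if_pos hj] at h1
    have h2 := hzlb j
    omega
  have hz0 : ∀ j ∉ S, z j = 0 := by
    intro j hj
    have h1 := hzub j
    rw [if_neg hj] at h1
    have h2 := hzlb j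
    omega
  refine ⟨S.filter (fun j => z j = 0), S.filter (fun j => z j = 1), ?_, ?_, ?_⟩
  · rw [Finset.disjoint_left]
    intro a ha hb
    simp only [Finset.mem_filter] at ha hb
    omega
  · ext j
    simp only [Finset.mem_union, Finset.mem_filter]
    constructor
    · rintro (h | h) <;> exact h.1
    · intro hj
      rcases hz01 j hj with h | h
      · exact Or.inl ⟨hj, h⟩
      · exact Or.inr ⟨hj, h⟩
  · intro i
    set S₂ : Finset (Fin n) := S.filter (fun j => z j = 1) with hS2
    have hsum2 : A i ⬝ᵥ (fun j => ((z j : ℚ))) = ∑ j ∈ S₂, A i j := by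
      show (∑ j, A i j * ((z j : ℚ))) = _
      rw [← Finset.sum_subset (Finset.subset_univ S₂)]
      · refine Finset.sum_congr rfl fun j hj => ?_
        have h1 : z j = 1 := (Finset.mem_filter.mp hj).2
        rw [h1]
        simp
      · intro j _ hj
        have h0 : z j = 0 := by
          by_cases hjS : j ∈ S
          · rcases hz01 j hjS with h | h
            · exact h
            · exact absurd (Finset.mem_filter.mpr ⟨hjS, h⟩) hj
          · exact hz0 j hjS
        rw [h0]
        simp
    have hsplit : (∑ j ∈ S.filter (fun j => z j = 0), A i j)
        = (bz i : ℚ) - ∑ j ∈ S₂, A i j := by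
      rw [hbzc]
      rw [← Finset.sum_filter_add_sum_filter_not S (fun j => z j = 0) (fun j => A i j)]
      have hfe : S.filter (fun j => ¬ z j = 0) = S₂ := by
        ext j
        simp only [Finset.mem_filter, hS2]
        constructor
        · rintro ⟨hj, h⟩
          rcases hz01 j hj with h0 | h1
          · exact absurd h0 h
          · exact ⟨hj, h1⟩
        · rintro ⟨hj, h⟩
          exact ⟨hj, by omega⟩
      rw [hfe]
      ring
    set w : ℤ := ∑ j ∈ S₂, B i j with hw
    have hwc : ((w : ℤ) : ℚ) = ∑ j ∈ S₂, A i j := by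
      push_cast [hw]
      exact Finset.sum_congr rfl fun j _ => hB i j
    have hub : w ≤ ⌈(bz i : ℚ)/2⌉ := by
      have h := hceil i
      rw [hsum2, ← hwc] at h
      exact_mod_cast h
    have hlb : ⌊(bz i : ℚ)/2⌋ ≤ w := by
      have h := hfloor i
      rw [hsum2, ← hwc] at h
      exact_mod_cast h
    have hf1 : 2 * ⌊(bz i : ℚ)/2⌋ ≤ bz i := by
      have h := Int.floor_le ((bz i : ℚ)/2)
      have h2 : ((2 * ⌊(bz i : ℚ)/2⌋ : ℤ) : ℚ) ≤ ((bz i : ℤ) : ℚ) := by push_cast; linarith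
      exact_mod_cast h2
    have hf2 : bz i ≤ 2 * ⌊(bz i : ℚ)/2⌋ + 1 := by
      have h := Int.lt_floor_add_one ((bz i : ℚ)/2)
      have h2 : ((bz i : ℤ) : ℚ) < 2 * ((⌊(bz i : ℚ)/2⌋ : ℤ) : ℚ) + 2 := by linarith
      have h3 : (bz i : ℤ) < 2 * ⌊(bz i : ℚ)/2⌋ + 2 := by exact_mod_cast h2
      omega
    have hc1 : bz i ≤ 2 * ⌈(bz i : ℚ)/2⌉ := by
      have h := Int.le_ceil ((bz i : ℚ)/2)
      have h2 : ((bz i : ℤ) : ℚ) ≤ ((2 * ⌈(bz i : ℚ)/2⌉ : ℤ) : ℚ) := by push_cast; linarith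
      exact_mod_cast h2
    have hc2 : 2 * ⌈(bz i : ℚ)/2⌉ ≤ bz i + 1 := by
      have h := Int.ceil_lt_add_one ((bz i : ℚ)/2)
      have h2 : 2 * ((⌈(bz i : ℚ)/2⌉ : ℤ) : ℚ) < ((bz i : ℤ) : ℚ) + 2 := by linarith
      have h3 : 2 * ⌈(bz i : ℚ)/2⌉ < (bz i : ℤ) + 2 := by exact_mod_cast h2
      omega
    have hkey : bz i - 2*w = -1 ∨ bz i - 2*w = 0 ∨ bz i - 2*w = 1 := by omega
    have hexpr : (∑ j ∈ S.filter (fun j => z j = 0), A i j) - ∑ j ∈ S₂, A i j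
        = ((bz i - 2*w : ℤ) : ℚ) := by
      rw [hsplit, ← hwc]
      push_cast
      ring
    rw [hexpr]
    rcases hkey with h | h | h <;> rw [h] <;> norm_num
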